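/- The function g has exactly one minimizer on D: there is a unique pair (c₁*, c₂*) ∈ D such that g(c₁*, c₂*) ≤ g(c₁, c₂) for all (c₁, c₂) ∈ D. -/

import Mathlib

open Set Filter Topology

/-- If `m < H'` on `Ioo a b` (with `0 ≤ a`), then `x ↦ H x - m x` is strictly
monotone on `Icc a b`. -/
lemma aux_strictMono {H H' : ℝ → ℝ}
    (hHcont : ContinuousOn H (Set.Ici 0))
    (hHderiv : ∀ x ∈ Set.Ioi (0:ℝ), HasDerivAt H (H' x) x)
    {m a b : ℝ} (ha : 0 ≤ a)
    (hm : ∀ x ∈ Set.Ioo a b, m < H' x) :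
    StrictMonoOn (fun x => H x - m * x) (Set.Icc a b) := by
  apply strictMonoOn_of_deriv_pos (convex_Icc a b)
  · exact (hHcont.mono (fun x hx => le_trans ha hx.1)).sub
      (continuous_const.mul continuous_id).continuousOn
  · intro x hx
    rw [interior_Icc] at hx
    have hx0 : (0:ℝ) < x := lt_of_le_of_lt ha hx.1
    have hd : HasDerivAt (fun x => H x - m * x) (H' x - m) x := by
      have h := (hHderiv x hx0).sub ((hasDerivAt_id x).const_mul m); rw [mul_one] at h; exact h
    rw [hd.deriv]
    linarith [hm x hx]

lemma aux_strictAnti {H H' : ℝ → ℝ}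
    (hHcont : ContinuousOn H (Set.Ici 0))
    (hHderiv : ∀ x ∈ Set.Ioi (0:ℝ), HasDerivAt H (H' x) x)
    {m a b : ℝ} (ha : 0 ≤ a)
    (hm : ∀ x ∈ Set.Ioo a b, H' x < m) :
    StrictAntiOn (fun x => H x - m * x) (Set.Icc a b) := by
  apply strictAntiOn_of_deriv_neg (convex_Icc a b)
  · exact (hHcont.mono (fun x hx => le_trans ha hx.1)).sub
      (continuous_const.mul continuous_id).continuousOn
  · intro x hx
    rw [interior_Icc] at hx
    have hx0 : (0:ℝ) < x := lt_of_le_of_lt ha hx.1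
    have hd : HasDerivAt (fun x => H x - m * x) (H' x - m) x := by
      have h := (hHderiv x hx0).sub ((hasDerivAt_id x).const_mul m); rw [mul_one] at h; exact h
    rw [hd.deriv]
    linarith [hm x hx]

/-- Linear lower bound from a lower bound on the derivative. -/
lemma aux_lin_le {H H' : ℝ → ℝ}
    (hHcont : ContinuousOn H (Set.Ici 0))
    (hHderiv : ∀ x ∈ Set.Ioi (0:ℝ), HasDerivAt H (H' x) x)
    {m a b : ℝ} (ha : 0 ≤ a) (hab : a ≤ b)
    (hm : ∀ x ∈ Set.Ioo a b, m ≤ H' x) :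
    m * (b - a) ≤ H b - H a := by
  have : MonotoneOn (fun x => H x - m * x) (Set.Icc a b) := by
    apply monotoneOn_of_deriv_nonneg (convex_Icc a b)
    · exact (hHcont.mono (fun x hx => le_trans ha hx.1)).sub
        (continuous_const.mul continuous_id).continuousOn
    · intro x hx
      rw [interior_Icc] at hx
      have hx0 : (0:ℝ) < x := lt_of_le_of_lt ha hx.1
      exact (((hHderiv x hx0).sub ((hasDerivAt_id x).const_mul m)).differentiableAt).differentiableWithinAt
    · intro x hx
      rw [interior_Icc] at hx
      have hx0 : (0:ℝ) < x := lt_of_le_of_lt ha hx.1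
      have hd : HasDerivAt (fun x => H x - m * x) (H' x - m) x := by
        have h := (hHderiv x hx0).sub ((hasDerivAt_id x).const_mul m); rw [mul_one] at h; exact h
      rw [hd.deriv]
      linarith [hm x hx]
  have h2 := this (Set.left_mem_Icc.2 hab) (Set.right_mem_Icc.2 hab) hab
  simp only at h2
  linarith

lemma aux_left_le {f : ℝ → ℝ} {a b C : ℝ} (ha : 0 ≤ a) (hab : a < b)
    (hf : ContinuousWithinAt f (Set.Ici 0) a)
    (hC : ∀ z ∈ Set.Ioo a b, f z ≤ C) : f a ≤ C := by
  have hsub : Set.Ioo a b ⊆ Set.Ici 0 := fun z hz => le_of_lt (lt_of_le_of_lt ha hz.1)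
  haveI : (𝓝[Set.Ioo a b] a).NeBot := by
    rw [← mem_closure_iff_nhdsWithin_neBot, closure_Ioo hab.ne]
    exact Set.left_mem_Icc.mpr hab.le
  exact le_of_tendsto (hf.mono hsub) (eventually_mem_nhdsWithin.mono (fun z hz => hC z hz))

lemma aux_left_ge {f : ℝ → ℝ} {a b C : ℝ} (ha : 0 ≤ a) (hab : a < b)
    (hf : ContinuousWithinAt f (Set.Ici 0) a)
    (hC : ∀ z ∈ Set.Ioo a b, C ≤ f z) : C ≤ f a := by
  have hsub : Set.Ioo a b ⊆ Set.Ici 0 := fun z hz => le_of_lt (lt_of_le_of_lt ha hz.1)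
  haveI : (𝓝[Set.Ioo a b] a).NeBot := by
    rw [← mem_closure_iff_nhdsWithin_neBot, closure_Ioo hab.ne]
    exact Set.left_mem_Icc.mpr hab.le
  exact ge_of_tendsto (hf.mono hsub) (eventually_mem_nhdsWithin.mono (fun z hz => hC z hz))

lemma aux_right_le {f : ℝ → ℝ} {a b C : ℝ} (ha : 0 ≤ a) (hab : a < b)
    (hf : ContinuousWithinAt f (Set.Ici 0) b)
    (hC : ∀ z ∈ Set.Ioo a b, f z ≤ C) : f b ≤ C := by
  have hsub : Set.Ioo a b ⊆ Set.Ici 0 := fun z hz => le_of_lt (lt_of_le_of_lt ha hz.1)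
  haveI : (𝓝[Set.Ioo a b] b).NeBot := by
    rw [← mem_closure_iff_nhdsWithin_neBot, closure_Ioo hab.ne]
    exact Set.right_mem_Icc.mpr hab.le
  exact le_of_tendsto (hf.mono hsub) (eventually_mem_nhdsWithin.mono (fun z hz => hC z hz))

/-- First-order conditions and location facts at a minimizer. -/
lemma aux_min_facts (H H' : ℝ → ℝ)
    (hHcont : ContinuousOn H (Set.Ici 0))
    (hHderiv : ∀ x ∈ Set.Ioi (0:ℝ), HasDerivAt H (H' x) x)
    (hH'cont : ContinuousOn H' (Set.Ici 0))
    (β : ℝ) (hβ : 0 < β)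
    (astar : ℝ) (hastar : 0 ≤ astar)
    (hH'dec : StrictAntiOn H' (Set.Ioo 0 astar))
    (hH'inc : StrictMonoOn H' (Set.Ioi astar))
    (c₁ c₂ : ℝ) (hc₁ : 0 ≤ c₁) (hc₂ : c₁ + β < c₂)
    (hmin : ∀ d₁ d₂ : ℝ, 0 ≤ d₁ → d₁ + β < d₂ →
      (H c₂ - H c₁) / (c₂ - c₁ - β) ≤ (H d₂ - H d₁) / (d₂ - d₁ - β)) :
    H' c₂ = (H c₂ - H c₁) / (c₂ - c₁ - β) ∧ astar < c₂ ∧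
    (0 < c₁ → (0 < c₁ ∧ c₁ < astar) ∧ H' c₁ = (H c₂ - H c₁) / (c₂ - c₁ - β)) ∧
    (c₁ = 0 → H' 0 ≤ (H c₂ - H c₁) / (c₂ - c₁ - β)) := by
  set m : ℝ := (H c₂ - H c₁) / (c₂ - c₁ - β) with hm_def
  have hden : (0:ℝ) < c₂ - c₁ - β := by linarith
  have hc₂0 : (0:ℝ) < c₂ := by linarith
  have fact1 : H c₂ - H c₁ = m * (c₂ - c₁ - β) := by
    rw [hm_def, div_mul_cancel₀ _ (ne_of_gt hden)]
  -- FOC in the second variable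
  have fact2 : H' c₂ = m := by
    have hloc : IsLocalMin (fun t => (H t - H c₁) / (t - c₁ - β)) c₂ := by
      filter_upwards [isOpen_Ioi.mem_nhds (show c₁ + β < c₂ from hc₂)] with t ht
      exact hmin c₁ t hc₁ ht
    have hd : HasDerivAt (fun t => (H t - H c₁) / (t - c₁ - β))
        ((H' c₂ * (c₂ - c₁ - β) - (H c₂ - H c₁) * 1) / (c₂ - c₁ - β) ^ 2) c₂ := by
      have h1 : HasDerivAt (fun t => H t - H c₁) (H' c₂) c₂ := by
        simpa using (hHderiv c₂ hc₂0).sub_const (H c₁)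
      have h2 : HasDerivAt (fun t : ℝ => t - c₁ - β) 1 c₂ := by
        simpa using ((hasDerivAt_id c₂).sub_const c₁).sub_const β
      exact h1.div h2 (ne_of_gt hden)
    have hzero := hloc.hasDerivAt_eq_zero hd
    have h3 : H' c₂ * (c₂ - c₁ - β) = H c₂ - H c₁ := by
      have hne : (c₂ - c₁ - β) ^ 2 ≠ 0 := pow_ne_zero _ (ne_of_gt hden)
      field_simp at hzero
      linarith
    rw [hm_def, eq_div_iff (ne_of_gt hden)]
    exact h3
  -- global inequality for F x = H x - m x
  have key : ∀ t, c₁ + β < t → H c₂ - m * c₂ ≤ H t - m * t := by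
    intro t ht
    have h := hmin c₁ t hc₁ ht
    rw [le_div_iff₀ (by linarith)] at h
    nlinarith [fact1]
  -- c₂ is to the right of astar
  have fact3 : astar < c₂ := by
    by_contra hcon
    push_neg at hcon
    rcases lt_or_eq_of_le hcon with hlt | heq
    · -- c₂ < astar : F is strictly decreasing past c₂, contradicting key at astar
      have hanti : StrictAntiOn (fun x => H x - m * x) (Set.Icc c₂ astar) :=
        aux_strictAnti hHcont hHderiv (le_of_lt hc₂0) (fun x hx => by
          have hx1 : x ∈ Set.Ioo 0 astar := ⟨lt_trans hc₂0 hx.1, hx.2⟩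
          have := hH'dec ⟨hc₂0, hlt⟩ hx1 hx.1
          linarith [fact2])
      have h1 := hanti (Set.left_mem_Icc.2 hlt.le) (Set.right_mem_Icc.2 hlt.le) hlt
      have h2 := key astar (by linarith)
      simp only at h1
      linarith
    · -- c₂ = astar : F is strictly increasing on (c₁+β, astar)
      subst heq
      set t := (c₁ + β + c₂) / 2 with ht_def
      have ht0 : c₁ + β < t := by simp only [ht_def]; linarith
      have hta : t < c₂ := by simp only [ht_def]; linarith
      have ht_pos : 0 < t := by linarith
      have hmono : StrictMonoOn (fun x => H x - m * x) (Set.Icc t c₂) := by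
        apply aux_strictMono hHcont hHderiv (le_of_lt ht_pos)
        intro x hx
        have hx0 : 0 < x := lt_trans ht_pos hx.1
        set y := (x + c₂) / 2 with hy_def
        have hxy : x < y := by simp only [hy_def]; linarith [hx.2]
        have hya : y < c₂ := by simp only [hy_def]; linarith [hx.2]
        have hy0 : 0 < y := lt_trans hx0 hxy
        have h1 : H' y < H' x := hH'dec ⟨hx0, hx.2⟩ ⟨hy0, hya⟩ hxy
        have h2 : H' c₂ ≤ H' y := by
          apply aux_right_le (le_of_lt hy0) hya (hH'cont c₂ hastar)
          intro z hz
          exact le_of_lt (hH'dec ⟨hy0, hya⟩ ⟨lt_trans hy0 hz.1, hz.2⟩ hz.1)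
        rw [fact2] at h2
        linarith
      have h1 := hmono (Set.left_mem_Icc.2 hta.le) (Set.right_mem_Icc.2 hta.le) hta
      have h2 := key t ht0
      simp only at h1
      linarith
  -- facts about c₁ in the interior case
  have fact4 : 0 < c₁ → ((0 < c₁ ∧ c₁ < astar) ∧ H' c₁ = m) := by
    intro hc₁0
    have hfoc : H' c₁ = m := by
      have hloc : IsLocalMin (fun s => (H c₂ - H s) / (c₂ - s - β)) c₁ := by
        have hopen : IsOpen (Set.Ioo (0:ℝ) (c₂ - β)) := isOpen_Ioo
        filter_upwards [hopen.mem_nhds ⟨hc₁0, by linarith⟩] with s hs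
        exact hmin s c₂ (le_of_lt hs.1) (by linarith [hs.2])
      have hd : HasDerivAt (fun s => (H c₂ - H s) / (c₂ - s - β))
          (((-H' c₁) * (c₂ - c₁ - β) - (H c₂ - H c₁) * (-1)) / (c₂ - c₁ - β) ^ 2) c₁ := by
        have h1 : HasDerivAt (fun s => H c₂ - H s) (-H' c₁) c₁ :=
          (hHderiv c₁ hc₁0).const_sub (H c₂)
        have h2 : HasDerivAt (fun s : ℝ => c₂ - s - β) (-1) c₁ := by
          simpa using ((hasDerivAt_id c₁).const_sub c₂).sub_const β
        exact h1.div h2 (ne_of_gt hden)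
      have hzero := hloc.hasDerivAt_eq_zero hd
      have h3 : H' c₁ * (c₂ - c₁ - β) = H c₂ - H c₁ := by
        field_simp at hzero
        linarith
      rw [hm_def, eq_div_iff (ne_of_gt hden)]
      exact h3
    refine ⟨⟨hc₁0, ?_⟩, hfoc⟩
    by_contra hcon
    push_neg at hcon
    rcases lt_or_eq_of_le hcon with hlt | heq
    · -- astar < c₁ : both c₁ and c₂ on the strictly increasing branch
      have := hH'inc hlt (lt_trans hlt (by linarith : c₁ < c₂)) (by linarith : c₁ < c₂)
      rw [hfoc, fact2] at this
      exact lt_irrefl _ this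
    · -- c₁ = astar
      rw [← heq] at hfoc
      have hs1 : astar < (astar + c₂) / 2 := by linarith [fact3]
      have hs2 : (astar + c₂) / 2 < c₂ := by linarith [fact3]
      have h1 : H' ((astar + c₂) / 2) < H' c₂ := hH'inc hs1 (lt_trans hs1 hs2) hs2
      have h2 : H' astar ≤ H' ((astar + c₂) / 2) := by
        apply aux_left_le hastar hs1 (hH'cont astar hastar)
        intro z hz
        exact le_of_lt (hH'inc hz.1 (lt_trans hz.1 hz.2) hz.2)
      rw [fact2] at h1
      linarith
  -- boundary first-order condition
  have fact5 : c₁ = 0 → H' 0 ≤ m := by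
    intro hc₁0
    subst hc₁0
    by_contra hcon
    push_neg at hcon
    set m' := (m + H' 0) / 2 with hm'_def
    have hm'1 : m < m' := by simp only [hm'_def]; linarith
    have hm'2 : m' < H' 0 := by simp only [hm'_def]; linarith
    have htend : Filter.Tendsto H' (nhdsWithin 0 (Set.Ici 0)) (nhds (H' 0)) :=
      hH'cont 0 (Set.self_mem_Ici)
    have hev : ∀ᶠ s in nhdsWithin 0 (Set.Ici 0), m' < H' s :=
      htend.eventually (eventually_gt_nhds hm'2)
    obtain ⟨δ, hδpos, hδ⟩ := Metric.mem_nhdsWithin_iff.mp hev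
    set s := min (δ / 2) ((c₂ - β) / 2) with hs_def
    have hs_pos : 0 < s := lt_min (by linarith) (by linarith)
    have hs_lt : s < δ := lt_of_le_of_lt (min_le_left _ _) (by linarith)
    have hs_c₂ : s + β < c₂ := by
      have := min_le_right (δ / 2) ((c₂ - β) / 2)
      rw [← hs_def] at this
      linarith
    -- H s - H 0 > m' * s
    have hmono : StrictMonoOn (fun x => H x - m' * x) (Set.Icc 0 s) := by
      apply aux_strictMono hHcont hHderiv le_rfl
      intro x hx
      have hx_mem : x ∈ Metric.ball (0:ℝ) δ ∩ Set.Ici 0 := by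
        constructor
        · rw [Metric.mem_ball, Real.dist_eq, sub_zero, abs_of_pos hx.1]
          linarith [hx.2]
        · exact le_of_lt hx.1
      exact hδ hx_mem
    have h1 := hmono (Set.left_mem_Icc.2 hs_pos.le) (Set.right_mem_Icc.2 hs_pos.le) hs_pos
    simp only [mul_zero, sub_zero] at h1
    -- from minimality at (s, c₂) : H s - H 0 ≤ m * s
    have h2 := hmin s c₂ hs_pos.le hs_c₂
    rw [le_div_iff₀ (by linarith)] at h2
    nlinarith [mul_lt_mul_of_pos_right hm'1 hs_pos, fact1]
  exact ⟨fact2, fact3, fact4, fact5⟩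

theorem stmt_5
    (H H' : ℝ → ℝ)
    (hHcont : ContinuousOn H (Set.Ici 0))
    (hHderiv : ∀ x ∈ Set.Ioi (0:ℝ), HasDerivAt H (H' x) x)
    (hH'pos : ∀ x ∈ Set.Ioi (0:ℝ), 0 < H' x)
    (hH'cont : ContinuousOn H' (Set.Ici 0))
    (hH'top : Filter.Tendsto H' Filter.atTop Filter.atTop)
    (β : ℝ) (hβ : 0 < β)
    (astar : ℝ) (hastar : 0 ≤ astar)
    (hH'dec : StrictAntiOn H' (Set.Ioo 0 astar))
    (hH'inc : StrictMonoOn H' (Set.Ioi astar))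
    :
    ∃! p : ℝ × ℝ, (0 ≤ p.1 ∧ p.1 + β < p.2) ∧
      ∀ d₁ d₂ : ℝ, 0 ≤ d₁ → d₁ + β < d₂ →
        (H p.2 - H p.1) / (p.2 - p.1 - β) ≤ (H d₂ - H d₁) / (d₂ - d₁ - β) := by
  have hHmono : StrictMonoOn H (Set.Ici 0) := by
    apply strictMonoOn_of_deriv_pos (convex_Ici 0) hHcont
    intro x hx
    rw [interior_Ici] at hx
    rw [(hHderiv x hx).deriv]
    exact hH'pos x hx
  -- reference value
  set M := (H (2*β) - H 0) / β with hM_def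
  have hMpos : 0 < M := by
    apply div_pos _ hβ
    have := hHmono (Set.self_mem_Ici) (show 2*β ∈ Set.Ici (0:ℝ) by
      simp only [Set.mem_Ici]; linarith) (by linarith)
    linarith
  set C := 2*M + 2 with hC_def
  clear_value M
  obtain ⟨R₀, hR₀⟩ : ∃ R₀, ∀ x ≥ R₀, C ≤ H' x :=
    Filter.eventually_atTop.mp (hH'top.eventually_ge_atTop C)
  set R := max R₀ (2*β) with hR_def
  have hR2β : 2*β ≤ R := le_max_right _ _
  have hRpos : 0 < R := lt_of_lt_of_le (by linarith) hR2β
  have hR₀R : R₀ ≤ R := le_max_left _ _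
  have hCM : C = 2*M + 2 := hC_def
  clear_value C
  clear_value R
  -- positive lower bound for the numerator near the diagonal
  have hu : ContinuousOn (fun s => H (s+β) - H s) (Set.Icc 0 R) := by
    apply ContinuousOn.sub
    · apply hHcont.comp (continuous_id.add continuous_const).continuousOn
      intro s hs
      simp only [Set.mem_Ici, id_eq, Pi.add_apply]
      linarith [hs.1]
    · exact hHcont.mono (fun s hs => hs.1)
  obtain ⟨s₀, hs₀mem, hs₀min⟩ :=
    isCompact_Icc.exists_isMinOn (Set.nonempty_Icc.2 hRpos.le) hu
  set δ := H (s₀+β) - H s₀ with hδ_def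
  have hδpos : 0 < δ := by
    have := hHmono (show s₀ ∈ Set.Ici (0:ℝ) from hs₀mem.1)
      (show s₀ + β ∈ Set.Ici (0:ℝ) by simp only [Set.mem_Ici]; linarith [hs₀mem.1])
      (by linarith)
    simp only [hδ_def]
    linarith
  clear_value δ
  set ε := min β (δ / (M+1)) with hε_def
  have hεpos : 0 < ε := lt_min hβ (div_pos hδpos (by linarith))
  have hεβ : ε ≤ β := min_le_left _ _
  have hεδ : ε ≤ δ / (M+1) := min_le_right _ _
  have hεδ' : (M+1) * ε ≤ δ := by
    rw [mul_comm]
    exact (le_div_iff₀ (by linarith)).mp hεδ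
  clear_value ε
  -- compact candidate region
  set K := (Set.Icc (0:ℝ) R ×ˢ Set.Icc (0:ℝ) (2*R)) ∩ {x : ℝ × ℝ | x.1 + β + ε ≤ x.2}
    with hK_def
  have hKcpt : IsCompact K :=
    (isCompact_Icc.prod isCompact_Icc).inter_right
      (isClosed_le (by fun_prop) (by fun_prop))
  have hp₀K : ((0:ℝ), 2*β) ∈ K := by
    simp only [hK_def, Set.mem_inter_iff, Set.mem_prod, Set.mem_Icc, Set.mem_setOf_eq]
    refine ⟨⟨⟨le_rfl, hRpos.le⟩, ⟨by linarith, by linarith⟩⟩, by linarith⟩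
  have hgcont : ContinuousOn (fun x : ℝ × ℝ => (H x.2 - H x.1) / (x.2 - x.1 - β)) K := by
    apply ContinuousOn.div
    · apply ContinuousOn.sub
      · apply hHcont.comp continuous_snd.continuousOn
        intro x hx
        exact hx.1.2.1
      · apply hHcont.comp continuous_fst.continuousOn
        intro x hx
        exact hx.1.1.1
    · exact ((continuous_snd.sub continuous_fst).sub continuous_const).continuousOn
    · intro x hx
      have := hx.2
      simp only [Set.mem_setOf_eq] at this
      have : (0:ℝ) < x.2 - x.1 - β := by linarith
      exact ne_of_gt this
  obtain ⟨p, hpK, hpmin⟩ := hKcpt.exists_isMinOn ⟨_, hp₀K⟩ hgcont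
  have hpK' := hpK
  simp only [hK_def, Set.mem_inter_iff, Set.mem_prod, Set.mem_Icc, Set.mem_setOf_eq] at hpK'
  have hpD1 : 0 ≤ p.1 := hpK'.1.1.1
  have hpD2 : p.1 + β < p.2 := by linarith [hpK'.2]
  -- value at reference point
  have hgp₀ : (H ((0:ℝ), 2*β).2 - H ((0:ℝ), 2*β).1) / (((0:ℝ), 2*β).2 - ((0:ℝ), 2*β).1 - β) = M := by
    simp only [hM_def]
    have : 2*β - 0 - β = β := by ring
    rw [this]
  have hgpM : (H p.2 - H p.1) / (p.2 - p.1 - β) ≤ M := by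
    have := isMinOn_iff.mp hpmin ((0:ℝ), 2*β) hp₀K
    rw [hgp₀] at this
    exact this
  -- bound outside K
  have hout : ∀ d₁ d₂ : ℝ, 0 ≤ d₁ → d₁ + β < d₂ → (d₁, d₂) ∉ K →
      M + 1 ≤ (H d₂ - H d₁) / (d₂ - d₁ - β) := by
    intro d₁ d₂ hd1 hd2 hnotK
    have hden : (0:ℝ) < d₂ - d₁ - β := by linarith
    have hd₂0 : (0:ℝ) < d₂ := by linarith
    by_cases hA : R < d₁
    · -- far right in the first coordinate
      have hlin : C * (d₂ - d₁) ≤ H d₂ - H d₁ :=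
        aux_lin_le hHcont hHderiv hd1 (by linarith)
          (fun x hx => hR₀ x (by linarith [hx.1]))
      rw [le_div_iff₀ hden]
      have f1 : (M+1) * (d₂ - d₁ - β) ≤ C * (d₂ - d₁ - β) :=
        mul_le_mul_of_nonneg_right (by rw [hCM]; linarith) (by linarith)
      have f2 : C * (d₂ - d₁ - β) ≤ C * (d₂ - d₁) :=
        mul_le_mul_of_nonneg_left (by linarith) (by rw [hCM]; linarith)
      linarith
    · push_neg at hA
      by_cases hB : 2*R < d₂
      · -- far right in the second coordinate
        have h0 : H d₁ ≤ H R := hHmono.monotoneOn hd1 hRpos.le hA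
        have hlin : C * (d₂ - R) ≤ H d₂ - H R :=
          aux_lin_le hHcont hHderiv hRpos.le (by linarith)
            (fun x hx => hR₀ x (by linarith [hx.1]))
        rw [le_div_iff₀ hden]
        have e1 : (M+1) * (d₂ - d₁ - β) ≤ (M+1) * d₂ :=
          mul_le_mul_of_nonneg_left (by linarith) (by linarith)
        have e2 : (M+1) * d₂ ≤ C * (d₂ - R) := by
          rw [hCM]
          nlinarith [mul_nonneg (show (0:ℝ) ≤ M+1 by linarith)
            (show (0:ℝ) ≤ d₂ - 2*R by linarith)]
        linarith
      · -- near the diagonal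
        push_neg at hB
        have hC' : d₂ < d₁ + β + ε := by
          by_contra hcc
          push_neg at hcc
          exact hnotK (by
            simp only [hK_def, Set.mem_inter_iff, Set.mem_prod, Set.mem_Icc, Set.mem_setOf_eq]
            exact ⟨⟨⟨hd1, hA⟩, ⟨hd₂0.le, hB⟩⟩, hcc⟩)
        have hnum1 : H (d₁ + β) ≤ H d₂ := hHmono.monotoneOn
          (show d₁ + β ∈ Set.Ici (0:ℝ) by simp only [Set.mem_Ici]; linarith)
          (Set.mem_Ici.mpr hd₂0.le) hd2.le
        have hnum2 : δ ≤ H (d₁ + β) - H d₁ := by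
          rw [hδ_def]; exact isMinOn_iff.mp hs₀min d₁ ⟨hd1, hA⟩
        rw [le_div_iff₀ hden]
        have f1 : (M+1) * (d₂ - d₁ - β) ≤ (M+1) * ε :=
          mul_le_mul_of_nonneg_left (by linarith) (by linarith)
        linarith
  -- p is a global minimizer
  have hpglobal : ∀ d₁ d₂ : ℝ, 0 ≤ d₁ → d₁ + β < d₂ →
      (H p.2 - H p.1) / (p.2 - p.1 - β) ≤ (H d₂ - H d₁) / (d₂ - d₁ - β) := by
    intro d₁ d₂ hd1 hd2
    by_cases hK : (d₁, d₂) ∈ K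
    · exact isMinOn_iff.mp hpmin (d₁, d₂) hK
    · have := hout d₁ d₂ hd1 hd2 hK
      linarith
  refine ⟨p, ⟨⟨hpD1, hpD2⟩, hpglobal⟩, ?_⟩
  -- uniqueness
  rintro ⟨d₁, d₂⟩ ⟨⟨hd1, hd2⟩, hdmin⟩
  dsimp only at hd1 hd2 hdmin
  obtain ⟨hp2, hp3, hp4, hp5⟩ := aux_min_facts H H' hHcont hHderiv hH'cont β hβ astar hastar
    hH'dec hH'inc p.1 p.2 hpD1 hpD2 hpglobal
  obtain ⟨hq2, hq3, hq4, hq5⟩ := aux_min_facts H H' hHcont hHderiv hH'cont β hβ astar hastar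
    hH'dec hH'inc d₁ d₂ hd1 hd2 hdmin
  have hvq : (H d₂ - H d₁) / (d₂ - d₁ - β) = (H p.2 - H p.1) / (p.2 - p.1 - β) :=
    le_antisymm (hdmin p.1 p.2 hpD1 hpD2) (hpglobal d₁ d₂ hd1 hd2)
  rw [hvq] at hq2
  have hd₂eq : d₂ = p.2 := hH'inc.injOn (Set.mem_Ioi.mpr hq3) (Set.mem_Ioi.mpr hp3)
    (hq2.trans hp2.symm)
  have hd₁eq : d₁ = p.1 := by
    rcases hd1.eq_or_lt with h0q | h0q
    · rcases hpD1.eq_or_lt with h0p | h0p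
      · rw [← h0q, ← h0p]
      · -- q boundary, p interior : contradiction
        exfalso
        obtain ⟨⟨hp1pos, hp1lt⟩, hp1foc⟩ := hp4 h0p
        have hq5' := hq5 h0q.symm
        rw [hvq] at hq5'
        set s := p.1 / 2 with hs_def
        have hs_pos : 0 < s := by simp only [hs_def]; linarith
        have hs_lt : s < p.1 := by simp only [hs_def]; linarith
        have h1 : H' p.1 < H' s :=
          hH'dec ⟨hs_pos, lt_trans hs_lt hp1lt⟩ ⟨hp1pos, hp1lt⟩ hs_lt
        have h2 : H' s ≤ H' 0 := by
          apply aux_left_ge le_rfl hs_pos (hH'cont 0 Set.self_mem_Ici)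
          intro z hz
          exact le_of_lt (hH'dec ⟨hz.1, lt_trans hz.2 (lt_trans hs_lt hp1lt)⟩
            ⟨hs_pos, lt_trans hs_lt hp1lt⟩ hz.2)
        rw [hp1foc] at h1
        linarith
    · rcases hpD1.eq_or_lt with h0p | h0p
      · -- p boundary, q interior : contradiction
        exfalso
        obtain ⟨⟨hq1pos, hq1lt⟩, hq1foc⟩ := hq4 h0q
        rw [hvq] at hq1foc
        have hp5' := hp5 h0p.symm
        set s := d₁ / 2 with hs_def
        have hs_pos : 0 < s := by simp only [hs_def]; linarith
        have hs_lt : s < d₁ := by simp only [hs_def]; linarith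
        have h1 : H' d₁ < H' s :=
          hH'dec ⟨hs_pos, lt_trans hs_lt hq1lt⟩ ⟨hq1pos, hq1lt⟩ hs_lt
        have h2 : H' s ≤ H' 0 := by
          apply aux_left_ge le_rfl hs_pos (hH'cont 0 Set.self_mem_Ici)
          intro z hz
          exact le_of_lt (hH'dec ⟨hz.1, lt_trans hz.2 (lt_trans hs_lt hq1lt)⟩
            ⟨hs_pos, lt_trans hs_lt hq1lt⟩ hz.2)
        rw [hq1foc] at h1
        linarith
      · -- both interior
        obtain ⟨⟨hq1pos, hq1lt⟩, hq1foc⟩ := hq4 h0q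
        obtain ⟨⟨hp1pos, hp1lt⟩, hp1foc⟩ := hp4 h0p
        rw [hvq] at hq1foc
        exact hH'dec.injOn ⟨hq1pos, hq1lt⟩ ⟨hp1pos, hp1lt⟩ (hq1foc.trans hp1foc.symm)
  rw [Prod.ext_iff]
  exact ⟨hd₁eq, hd₂eq⟩
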